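/- arXiv:1007.1368 — 3 statements merged into one kernel-verified Lean document; each statement's English description precedes it below -/
import Mathlib

section
/- Let (f, γ, β) be a point of the polytope Q_p defined by the PNBLPD constraints. Then setting w_{j,b} = β_{j,b} for all j ∈ J and b ∈ C_j yields a point (f, w) of the polytope Q_f defined by the NBLPD constraints; that is, for every j ∈ J, i ∈ I_j, α ∈ R⁻, one has f_i^{(α)} = ∑_{b ∈ C_j, b_i = α} w_{j,b}, and w_{j,·} is a probability distribution on C_j. -/
/-- The local single parity check code C_j attached to row j of the parity-check matrix H:
    vectors supported on I_j = supp(H_j) satisfying the parity check. -/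
def SPCCode (R : Type*) [Ring R] (n m : ℕ) (H : Fin m → Fin n → R) (j : Fin m) :=
  {b : Fin n → R // (∀ i, H j i = 0 → b i = 0) ∧ (∑ i, b i * H j i) = 0}

instance (R : Type*) [Ring R] [Fintype R] [DecidableEq R] (n m : ℕ)
    (H : Fin m → Fin n → R) (j : Fin m) : Fintype (SPCCode R n m H j) :=
  Subtype.fintype _

/-- Theorem 1, forward direction: every point (f, γ, β) of the polytope Q_p (PNBLPD) yields,
    via w := β, a point (f, w) of the polytope Q_f (NBLPD). -/
theorem Qp_subset_Qf (R : Type*) [Ring R] [Fintype R] [DecidableEq R]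
    (n m : ℕ) (H : Fin m → Fin n → R)
    (f : Fin n → {ρ : R // ρ ≠ 0} → ℝ)
    (u : Fin n → Option (Fin m) → {ρ : R // ρ ≠ 0} → ℝ)
    (v : Fin m → Fin n → {ρ : R // ρ ≠ 0} → ℝ)
    (γ : Fin n → R → ℝ)
    (β : ∀ j : Fin m, SPCCode R n m H j → ℝ)
    -- Q_p constraints:
    (hfu : ∀ i, f i = u i none)
    (huv : ∀ j i, H j i ≠ 0 → u i (some j) = v j i)
    (hu0 : ∀ i (α : {ρ : R // ρ ≠ 0}),
      u i none α = ∑ a : R, γ i a * (if (α : R) = a then 1 else 0))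
    (huj : ∀ i j, H j i ≠ 0 → ∀ α : {ρ : R // ρ ≠ 0},
      u i (some j) α = ∑ a : R, γ i a * (if (α : R) = a then 1 else 0))
    (hv : ∀ j i, H j i ≠ 0 → ∀ α : {ρ : R // ρ ≠ 0},
      v j i α = ∑ b : SPCCode R n m H j, β j b * (if b.1 i = (α : R) then 1 else 0))
    (hγpos : ∀ i a, 0 ≤ γ i a)
    (hβpos : ∀ j b, 0 ≤ β j b)
    (hγsum : ∀ i, (∑ a : R, γ i a) = 1)
    (hβsum : ∀ j, (∑ b : SPCCode R n m H j, β j b) = 1) :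
    -- (f, w) with w = β satisfies the Q_f (NBLPD) constraints:
    ∃ w : ∀ j : Fin m, SPCCode R n m H j → ℝ,
      (∀ j b, w j b = β j b) ∧
      (∀ j i, H j i ≠ 0 → ∀ α : {ρ : R // ρ ≠ 0},
        f i α = ∑ b : SPCCode R n m H j, (if b.1 i = (α : R) then w j b else 0)) ∧
      (∀ j b, 0 ≤ w j b) ∧
      (∀ j, (∑ b : SPCCode R n m H j, w j b) = 1) := by
  refine ⟨β, fun _ _ => rfl, ?_, hβpos, hβsum⟩
  intro j i hji α
  have h1 : f i α = u i (some j) α := by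
    rw [hfu i, hu0 i α, huj i j hji α]
  rw [h1, huv j i hji, hv j i hji α]
  exact Finset.sum_congr rfl fun b _ => by
    by_cases h : b.1 i = (α : R) <;> simp [h]
end

section
/- Conversely, for every point (f, w) of the NBLPD polytope Q_f there exist nonnegative weights γ (convex combinations over the repetition codes A_i) and β = w such that (f, γ, β) lies in the PNBLPD polytope Q_p. Hence the projections of Q_f and Q_p onto the f-coordinates coincide. -/
/-- Theorem 1, converse direction: for every point (f, w) of the polytope Q_f (NBLPD)
    there exist repetition-code weights γ, auxiliary variables u, v, and SPC weights
    β = w such that (f, γ, β) lies in the polytope Q_p (PNBLPD). -/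
theorem Qf_subset_Qp (R : Type*) [Ring R] [Fintype R] [DecidableEq R]
    (n m : ℕ) (H : Fin m → Fin n → R)
    (hcol : ∀ i, ∃ j, H j i ≠ 0)
    (f : Fin n → {ρ : R // ρ ≠ 0} → ℝ)
    (w : ∀ j : Fin m, SPCCode R n m H j → ℝ)
    -- Q_f (NBLPD) constraints:
    (hfw : ∀ j i, H j i ≠ 0 → ∀ α : {ρ : R // ρ ≠ 0},
      f i α = ∑ b : SPCCode R n m H j, (if b.1 i = (α : R) then w j b else 0))
    (hwpos : ∀ j b, 0 ≤ w j b)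
    (hwsum : ∀ j, (∑ b : SPCCode R n m H j, w j b) = 1) :
    -- existence of a Q_p point with β = w:
    ∃ (u : Fin n → Option (Fin m) → {ρ : R // ρ ≠ 0} → ℝ)
      (v : Fin m → Fin n → {ρ : R // ρ ≠ 0} → ℝ)
      (γ : Fin n → R → ℝ)
      (β : ∀ j : Fin m, SPCCode R n m H j → ℝ),
      (∀ j b, β j b = w j b) ∧
      (∀ i, f i = u i none) ∧
      (∀ j i, H j i ≠ 0 → u i (some j) = v j i) ∧
      (∀ i (α : {ρ : R // ρ ≠ 0}),
        u i none α = ∑ a : R, γ i a * (if (α : R) = a then 1 else 0)) ∧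
      (∀ i j, H j i ≠ 0 → ∀ α : {ρ : R // ρ ≠ 0},
        u i (some j) α = ∑ a : R, γ i a * (if (α : R) = a then 1 else 0)) ∧
      (∀ j i, H j i ≠ 0 → ∀ α : {ρ : R // ρ ≠ 0},
        v j i α = ∑ b : SPCCode R n m H j, β j b * (if b.1 i = (α : R) then 1 else 0)) ∧
      (∀ i a, 0 ≤ γ i a) ∧
      (∀ j b, 0 ≤ β j b) ∧
      (∀ i, (∑ a : R, γ i a) = 1) ∧
      (∀ j, (∑ b : SPCCode R n m H j, β j b) = 1) := by

  classical
  -- γ: weights of repetition code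
  set γ : Fin n → R → ℝ := fun i a =>
    if h : a = (0 : R) then 1 - ∑ α : {ρ : R // ρ ≠ 0}, f i α else f i ⟨a, h⟩ with hγ
  have hγval : ∀ i (α : {ρ : R // ρ ≠ 0}), γ i (α : R) = f i α := by
    intro i α
    simp only [hγ, dif_neg α.2]
  -- key: inner sum over nonzero α
  have key : ∀ j (b : SPCCode R n m H j) i,
      (∑ α : {ρ : R // ρ ≠ 0}, if b.1 i = (α : R) then w j b else 0)
        = if b.1 i = 0 then 0 else w j b := by
    intro j b i
    by_cases h : b.1 i = 0
    · simp only [h, if_pos]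
      apply Finset.sum_eq_zero
      intro α _
      have : (0 : R) ≠ (α : R) := fun hh => α.2 hh.symm
      simp [this]
    · rw [if_neg h]
      rw [show (∑ α : {ρ : R // ρ ≠ 0}, if b.1 i = (α : R) then w j b else 0)
          = ∑ α : {ρ : R // ρ ≠ 0}, if α = ⟨b.1 i, h⟩ then w j b else 0 by
        apply Finset.sum_congr rfl; intro α _
        congr 1
        simp [Subtype.ext_iff, eq_comm]]
      simp
  have hS : ∀ i, (∑ α : {ρ : R // ρ ≠ 0}, f i α) ≤ 1 := by
    intro i
    obtain ⟨j, hj⟩ := hcol i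
    calc (∑ α : {ρ : R // ρ ≠ 0}, f i α)
        = ∑ α : {ρ : R // ρ ≠ 0}, ∑ b : SPCCode R n m H j,
            (if b.1 i = (α : R) then w j b else 0) := by
          exact Finset.sum_congr rfl fun α _ => hfw j i hj α
      _ = ∑ b : SPCCode R n m H j, ∑ α : {ρ : R // ρ ≠ 0},
            (if b.1 i = (α : R) then w j b else 0) := Finset.sum_comm
      _ = ∑ b : SPCCode R n m H j, (if b.1 i = 0 then 0 else w j b) := by
          exact Finset.sum_congr rfl fun b _ => key j b i
      _ ≤ ∑ b : SPCCode R n m H j, w j b := by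
          apply Finset.sum_le_sum
          intro b _
          by_cases h : b.1 i = 0 <;> simp [h, hwpos j b]
      _ = 1 := hwsum j
  have hfnn : ∀ i (α : {ρ : R // ρ ≠ 0}), 0 ≤ f i α := by
    intro i α
    obtain ⟨j, hj⟩ := hcol i
    rw [hfw j i hj α]
    apply Finset.sum_nonneg
    intro b _
    by_cases h : b.1 i = (α : R) <;> simp [h, hwpos j b]
  have hγnn : ∀ i a, 0 ≤ γ i a := by
    intro i a
    by_cases h : a = (0 : R)
    · simp only [hγ, dif_pos h]
      linarith [hS i]
    · simp only [hγ, dif_neg h]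
      exact hfnn i ⟨a, h⟩
  have hγsum : ∀ i, (∑ a : R, γ i a) = 1 := by
    intro i
    have h0 : (0 : R) ∈ (Finset.univ : Finset R) := Finset.mem_univ _
    rw [← Finset.add_sum_erase _ _ h0]
    have herase : (∑ a ∈ Finset.univ.erase (0 : R), γ i a)
        = ∑ α : {ρ : R // ρ ≠ 0}, f i α := by
      rw [Finset.sum_subtype (p := fun a : R => a ≠ 0) (Finset.univ.erase (0:R))
        (by intro x; simp) (fun a => γ i a)]
      exact Finset.sum_congr rfl fun α _ => hγval i α
    rw [herase]
    simp only [hγ, dif_pos rfl]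
    ring
  have hrep : ∀ i (α : {ρ : R // ρ ≠ 0}),
      f i α = ∑ a : R, γ i a * (if (α : R) = a then 1 else 0) := by
    intro i α
    rw [show (∑ a : R, γ i a * (if (α : R) = a then 1 else 0))
        = ∑ a : R, (if a = (α : R) then γ i a else 0) by
      apply Finset.sum_congr rfl; intro a _
      by_cases h : (α : R) = a
      · simp [h]
      · simp [h, Ne.symm h]]
    simp [hγval i α]
  refine ⟨fun i _ => f i, fun j i => f i, γ, w,
    fun j b => rfl, fun i => rfl, fun j i _ => rfl,
    fun i α => hrep i α, fun i j _ α => hrep i α, ?_,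
    hγnn, hwpos, hγsum, hwsum⟩
  intro j i hj α
  show f i α = _
  rw [hfw j i hj α]
  apply Finset.sum_congr rfl
  intro b _
  by_cases h : b.1 i = (α : R) <;> simp [h]
end

section
/- The function h(x) = -ψ^{-1}(ψ(V̄) + ψ(x)ψ(V)) - ψ^{-1}(ψ(C̄) + ψ(-x)ψ(C)), where ψ(t) = e^{κt} and ψ^{-1}(t) = (1/κ) log t with κ > 0, attains its unique global maximum over x ∈ ℝ at x* = ((V̄ - V) - (C̄ - C))/2. -/
open Real

private lemma aux_two_le {t : ℝ} (ht : 0 < t) : 2 ≤ t + t⁻¹ := by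
  have h1 : t * t⁻¹ = 1 := mul_inv_cancel₀ ht.ne'
  nlinarith [sq_nonneg (t - 1)]

private lemma aux_eq_one {t : ℝ} (ht : 0 < t) (h : t + t⁻¹ = 2) : t = 1 := by
  have h1 : t * t⁻¹ = 1 := mul_inv_cancel₀ ht.ne'
  have h2 : (t - 1) ^ 2 = 0 := by nlinarith
  have := pow_eq_zero_iff (n := 2) (by norm_num) |>.mp h2
  linarith

/-- The softened local function h attains its unique global maximum at
    x* = ((V̄ - V) - (C̄ - C))/2. -/
theorem local_function_unique_max (κ Vb V Cb C : ℝ) (hκ : 0 < κ) :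
    let h : ℝ → ℝ := fun x =>
      -((1/κ) * Real.log (Real.exp (κ * Vb) + Real.exp (κ * x) * Real.exp (κ * V)))
      - (1/κ) * Real.log (Real.exp (κ * Cb) + Real.exp (κ * (-x)) * Real.exp (κ * C))
    let xstar : ℝ := ((Vb - V) - (Cb - C)) / 2
    (∀ x : ℝ, h x ≤ h xstar) ∧ (∀ x : ℝ, h x = h xstar → x = xstar) := by
  intro h xstar
  set F : ℝ → ℝ := fun x =>
    (Real.exp (κ * Vb) + Real.exp (κ * x) * Real.exp (κ * V)) *
    (Real.exp (κ * Cb) + Real.exp (κ * (-x)) * Real.exp (κ * C)) with hFdef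
  have hP : ∀ x : ℝ, 0 < Real.exp (κ * Vb) + Real.exp (κ * x) * Real.exp (κ * V) := by
    intro x; positivity
  have hQ : ∀ x : ℝ, 0 < Real.exp (κ * Cb) + Real.exp (κ * (-x)) * Real.exp (κ * C) := by
    intro x; positivity
  have hFpos : ∀ x : ℝ, 0 < F x := fun x => mul_pos (hP x) (hQ x)
  have hF : ∀ x : ℝ, h x = -(1/κ) * Real.log (F x) := by
    intro x
    simp only [h, hFdef]
    rw [Real.log_mul (hP x).ne' (hQ x).ne']
    ring
  set E : ℝ := Real.exp (κ * ((Vb + C + Cb + V) / 2)) with hEdef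
  have hE : 0 < E := Real.exp_pos _
  have key : ∀ x : ℝ, F x - F xstar
      = E * (Real.exp (κ * (x - xstar)) + (Real.exp (κ * (x - xstar)))⁻¹ - 2) := by
    intro x
    rw [← Real.exp_neg]
    simp only [hFdef, hEdef, xstar, ← Real.exp_add, mul_add, add_mul]
    ring_nf
    simp only [← Real.exp_add]
    ring_nf
  constructor
  · intro x
    have h2 : 2 ≤ Real.exp (κ * (x - xstar)) + (Real.exp (κ * (x - xstar)))⁻¹ :=
      aux_two_le (Real.exp_pos _)
    have hle : F xstar ≤ F x := by nlinarith [key x]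
    have hlog := Real.log_le_log (hFpos xstar) hle
    rw [hF x, hF xstar]
    have hκ' : 0 < 1/κ := by positivity
    nlinarith
  · intro x hx
    rw [hF x, hF xstar] at hx
    have hκ' : (1/κ : ℝ) ≠ 0 := by positivity
    have hlog : Real.log (F x) = Real.log (F xstar) := by
      field_simp at hx
      linarith
    have hFeq : F x = F xstar := by
      have := congrArg Real.exp hlog
      rwa [Real.exp_log (hFpos x), Real.exp_log (hFpos xstar)] at this
    have h0 : E * (Real.exp (κ * (x - xstar)) + (Real.exp (κ * (x - xstar)))⁻¹ - 2) = 0 := by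
      rw [← key x, hFeq]; ring
    have h2 : Real.exp (κ * (x - xstar)) + (Real.exp (κ * (x - xstar)))⁻¹ = 2 := by
      rcases mul_eq_zero.mp h0 with h | h
      · exact absurd h hE.ne'
      · linarith
    have h1 : Real.exp (κ * (x - xstar)) = 1 := aux_eq_one (Real.exp_pos _) h2
    have : κ * (x - xstar) = 0 := by
      have := congrArg Real.log h1
      rwa [Real.log_exp, Real.log_one] at this
    have hx0 : x - xstar = 0 := by
      rcases mul_eq_zero.mp this with h | h
      · exact absurd h hκ.ne'
      · exact h
    linarith
end
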